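/- For any absolutely continuous function f : [0,1] → ℝ satisfying ∫₀¹ y(1-y)|f'(y)|² dy < ∞, one has ∫₀¹ |f(y) - ∫₀¹ f(z) dz|² dy ≤ (1/2) ∫₀¹ y(1-y)|f'(y)|² dy. -/

import Mathlib

open MeasureTheory
open Set
open scoped ENNReal
open scoped Classical
set_option maxHeartbeats 1000000

open MeasureTheory Set

/-- Expansion of the double integral of `(g s - g t)^2`. -/
lemma expand_double (ν : Measure ℝ) [IsFiniteMeasure ν] (g : ℝ → ℝ)
    (h1 : Integrable g ν) (h2 : Integrable (fun x => g x ^ 2) ν) :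
    ∫ s, ∫ t, (g s - g t) ^ 2 ∂ν ∂ν
      = 2 * ((ν Set.univ).toReal * ∫ x, g x ^ 2 ∂ν) - 2 * (∫ x, g x ∂ν) ^ 2 := by
  set c := (ν Set.univ).toReal with hc
  set m := ∫ x, g x ∂ν with hm
  set q := ∫ x, g x ^ 2 ∂ν with hq
  have inner : ∀ s : ℝ, ∫ t, (g s - g t) ^ 2 ∂ν = g s ^ 2 * c - 2 * g s * m + q := by
    intro s
    have h3 : Integrable (fun t => g s ^ 2 - 2 * g s * g t) ν :=
      (integrable_const _).sub (h1.const_mul _)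
    calc ∫ t, (g s - g t) ^ 2 ∂ν
        = ∫ t, ((g s ^ 2 - 2 * g s * g t) + g t ^ 2) ∂ν := by
          congr 1; funext t; ring
      _ = (∫ t, (g s ^ 2 - 2 * g s * g t) ∂ν) + q := integral_add h3 h2
      _ = ((∫ _t, (g s : ℝ) ^ 2 ∂ν) - ∫ t, 2 * g s * g t ∂ν) + q := by
          rw [integral_sub (integrable_const _) (h1.const_mul _)]
      _ = g s ^ 2 * c - 2 * g s * m + q := by
          rw [integral_const, integral_const_mul, smul_eq_mul, measureReal_def, ← hc]; ring
  rw [integral_congr_ae (Filter.Eventually.of_forall inner)]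
  have hB : Integrable (fun s => 2 * g s * m) ν := (h1.const_mul 2).mul_const m
  calc ∫ s, (g s ^ 2 * c - 2 * g s * m + q) ∂ν
      = (∫ s, (g s ^ 2 * c - 2 * g s * m) ∂ν) + ∫ _s, q ∂ν :=
        integral_add ((h2.mul_const c).sub hB) (integrable_const q)
    _ = ((∫ s, g s ^ 2 * c ∂ν) - ∫ s, 2 * g s * m ∂ν) + ∫ _s, q ∂ν := by
        rw [integral_sub (h2.mul_const c) hB]
    _ = 2 * (c * q) - 2 * m ^ 2 := by
        rw [integral_mul_const, integral_const, smul_eq_mul, measureReal_def, ← hc, integral_mul_const,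
          integral_const_mul]
        ring

/-- Cauchy–Schwarz for the integral. -/
lemma cs_aux (ν : Measure ℝ) [IsFiniteMeasure ν] (g : ℝ → ℝ)
    (h1 : Integrable g ν) (h2 : Integrable (fun x => g x ^ 2) ν) :
    (∫ x, g x ∂ν) ^ 2 ≤ (ν Set.univ).toReal * ∫ x, g x ^ 2 ∂ν := by
  have h := expand_double ν g h1 h2
  have hnn : 0 ≤ ∫ s, ∫ t, (g s - g t) ^ 2 ∂ν ∂ν :=
    integral_nonneg fun s => integral_nonneg fun t => sq_nonneg _
  nlinarith [h, hnn]


/-- The condition that `t` lies between `y` and `z` (in `Ioc (min y z) (max y z)`). -/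
def wpCond (y z t : ℝ) : Prop := (y < t ∧ t ≤ z) ∨ (z < t ∧ t ≤ y)

lemma wpCond_iff (y z t : ℝ) : wpCond y z t ↔ t ∈ Ioc (min y z) (max y z) := by
  unfold wpCond
  rcases le_total y z with h | h
  · rw [min_eq_left h, max_eq_right h]
    constructor
    · rintro (⟨h1, h2⟩ | ⟨h1, h2⟩)
      · exact ⟨h1, h2⟩
      · exact absurd h1 (not_lt.2 (h2.trans h))
    · exact fun ⟨h1, h2⟩ => Or.inl ⟨h1, h2⟩
  · rw [min_eq_right h, max_eq_left h]
    constructor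
    · rintro (⟨h1, h2⟩ | ⟨h1, h2⟩)
      · exact absurd h1 (not_lt.2 (h2.trans h))
      · exact ⟨h1, h2⟩
    · exact fun ⟨h1, h2⟩ => Or.inr ⟨h1, h2⟩

lemma wpCond_measurableSet {α : Type*} [MeasurableSpace α] (u v w : α → ℝ)
    (hu : Measurable u) (hv : Measurable v) (hw : Measurable w) :
    MeasurableSet {p : α | wpCond (u p) (v p) (w p)} := by
  unfold wpCond
  simp only [Set.setOf_or, Set.setOf_and]
  exact ((measurableSet_lt hu hw).inter (measurableSet_le hw hv)).union
    ((measurableSet_lt hv hw).inter (measurableSet_le hw hu))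

lemma lint_ofReal_eq {S : Set ℝ} (φ : ℝ → ℝ) (hInt : IntegrableOn φ S volume)
    (hnn : ∀ᵐ y ∂(volume.restrict S), 0 ≤ φ y) :
    ∫⁻ y in S, ENNReal.ofReal (φ y) = ENNReal.ofReal (∫ y in S, φ y) :=
  (ofReal_integral_eq_lintegral_ofReal hInt hnn).symm

lemma kappa_lt {y t : ℝ} (hy : 0 < y) (hyt : y < t) (ht1 : t < 1) :
    (∫⁻ z in Ioo (0:ℝ) 1, if wpCond y z t then ENNReal.ofReal |z - y| else 0)
      = ENNReal.ofReal ((1 - t ^ 2) / 2 - (1 - t) * y) := by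
  have hsplit : Ioo (0:ℝ) 1 = Ioo 0 t ∪ Ico t 1 :=
    (Ioo_union_Ico_eq_Ioo (hy.trans hyt) ht1.le).symm
  have hdisj : Disjoint (Ioo (0:ℝ) t) (Ico t 1) :=
    Set.disjoint_left.2 fun z hz hz2 => absurd hz.2 (not_lt.2 hz2.1)
  rw [hsplit, lintegral_union measurableSet_Ico hdisj]
  have e0 : ∫⁻ z in Ioo (0:ℝ) t, (if wpCond y z t then ENNReal.ofReal |z - y| else 0)
      = ∫⁻ _z in Ioo (0:ℝ) t, (0 : ℝ≥0∞) := by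
    refine setLIntegral_congr_fun measurableSet_Ioo (fun z hz => ?_)
    rw [if_neg]
    rintro (⟨h1, h2⟩ | ⟨h1, h2⟩)
    · exact absurd h2 (not_le.2 hz.2)
    · exact absurd (hyt.trans_le h2) (lt_irrefl _)
  have e1 : ∫⁻ z in Ico t 1, (if wpCond y z t then ENNReal.ofReal |z - y| else 0)
      = ∫⁻ z in Ico t 1, ENNReal.ofReal (z - y) := by
    refine setLIntegral_congr_fun measurableSet_Ico (fun z hz => ?_)
    rw [if_pos (show wpCond y z t from Or.inl ⟨hyt, hz.1⟩), abs_of_nonneg (sub_nonneg.2 (hyt.le.trans hz.1))]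
  have w1 : ∫⁻ z in Ico t 1, ENNReal.ofReal (z - y) = ENNReal.ofReal (∫ z in Ico t 1, (z - y)) :=
    lint_ofReal_eq (fun z => z - y)
      ((Continuous.integrableOn_Icc (by fun_prop)).mono_set Ico_subset_Icc_self)
      ((ae_restrict_mem measurableSet_Ico).mono fun z hz => sub_nonneg.2 (hyt.le.trans hz.1))
  rw [e0, e1, lintegral_zero, zero_add, w1]
  congr 1
  have h1 : ∫ z in Ico t 1, (z - y) = ∫ z in t..1, (z - y) := by
    rw [intervalIntegral.integral_of_le ht1.le, integral_Ico_eq_integral_Ioo,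
      integral_Ioc_eq_integral_Ioo]
  rw [h1, intervalIntegral.integral_sub intervalIntegral.intervalIntegrable_id
    intervalIntegrable_const, integral_id, intervalIntegral.integral_const,
    smul_eq_mul]
  ring

lemma kappa_ge {y t : ℝ} (ht : 0 < t) (hty : t ≤ y) (ht1 : t < 1) :
    (∫⁻ z in Ioo (0:ℝ) 1, if wpCond y z t then ENNReal.ofReal |z - y| else 0)
      = ENNReal.ofReal (y * t - t ^ 2 / 2) := by
  have hsplit : Ioo (0:ℝ) 1 = Ioo 0 t ∪ Ico t 1 := (Ioo_union_Ico_eq_Ioo ht ht1.le).symm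
  have hdisj : Disjoint (Ioo (0:ℝ) t) (Ico t 1) :=
    Set.disjoint_left.2 fun z hz hz2 => absurd hz.2 (not_lt.2 hz2.1)
  rw [hsplit, lintegral_union measurableSet_Ico hdisj]
  have e0 : ∫⁻ z in Ico t 1, (if wpCond y z t then ENNReal.ofReal |z - y| else 0)
      = ∫⁻ _z in Ico t 1, (0 : ℝ≥0∞) := by
    refine setLIntegral_congr_fun measurableSet_Ico (fun z hz => ?_)
    rw [if_neg]
    rintro (⟨h1, h2⟩ | ⟨h1, h2⟩)
    · exact absurd (h1.trans_le hty) (lt_irrefl _)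
    · exact absurd h1 (not_lt.2 hz.1)
  have e1 : ∫⁻ z in Ioo (0:ℝ) t, (if wpCond y z t then ENNReal.ofReal |z - y| else 0)
      = ∫⁻ z in Ioo (0:ℝ) t, ENNReal.ofReal (y - z) := by
    refine setLIntegral_congr_fun measurableSet_Ioo (fun z hz => ?_)
    rw [if_pos (show wpCond y z t from Or.inr ⟨hz.2, hty⟩), abs_sub_comm,
      abs_of_nonneg (sub_nonneg.2 (hz.2.le.trans hty))]
  have w1 : ∫⁻ z in Ioo (0:ℝ) t, ENNReal.ofReal (y - z)
      = ENNReal.ofReal (∫ z in Ioo (0:ℝ) t, (y - z)) :=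
    lint_ofReal_eq (fun z => y - z)
      ((Continuous.integrableOn_Icc (by fun_prop)).mono_set Ioo_subset_Icc_self)
      ((ae_restrict_mem measurableSet_Ioo).mono fun z hz => sub_nonneg.2 (hz.2.le.trans hty))
  rw [e0, e1, lintegral_zero, add_zero, w1]
  congr 1
  have h1 : ∫ z in Ioo (0:ℝ) t, (y - z) = ∫ z in (0:ℝ)..t, (y - z) := by
    rw [intervalIntegral.integral_of_le ht.le, integral_Ioc_eq_integral_Ioo]
  rw [h1, intervalIntegral.integral_sub intervalIntegrable_const
    intervalIntegral.intervalIntegrable_id, integral_id, intervalIntegral.integral_const,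
    smul_eq_mul]
  ring

lemma kernel_total {t : ℝ} (ht : t ∈ Ioo (0:ℝ) 1) :
    (∫⁻ y in Ioo (0:ℝ) 1, ∫⁻ z in Ioo (0:ℝ) 1,
        if wpCond y z t then ENNReal.ofReal |z - y| else 0)
      = ENNReal.ofReal (t * (1 - t)) := by
  obtain ⟨ht0, ht1⟩ := ht
  have hsplit : Ioo (0:ℝ) 1 = Ioo 0 t ∪ Ico t 1 := (Ioo_union_Ico_eq_Ioo ht0 ht1.le).symm
  have hdisj : Disjoint (Ioo (0:ℝ) t) (Ico t 1) :=
    Set.disjoint_left.2 fun z hz hz2 => absurd hz.2 (not_lt.2 hz2.1)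
  nth_rewrite 1 [hsplit]
  rw [lintegral_union measurableSet_Ico hdisj]
  have e1 : ∫⁻ y in Ioo (0:ℝ) t, ∫⁻ z in Ioo (0:ℝ) 1,
      (if wpCond y z t then ENNReal.ofReal |z - y| else 0)
      = ∫⁻ y in Ioo (0:ℝ) t, ENNReal.ofReal ((1 - t ^ 2) / 2 - (1 - t) * y) :=
    setLIntegral_congr_fun measurableSet_Ioo
      (fun y hy => kappa_lt hy.1 hy.2 ht1)
  have e2 : ∫⁻ y in Ico t 1, ∫⁻ z in Ioo (0:ℝ) 1,
      (if wpCond y z t then ENNReal.ofReal |z - y| else 0)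
      = ∫⁻ y in Ico t 1, ENNReal.ofReal (y * t - t ^ 2 / 2) :=
    setLIntegral_congr_fun measurableSet_Ico
      (fun y hy => kappa_ge ht0 hy.1 ht1)
  have w1 : ∫⁻ y in Ioo (0:ℝ) t, ENNReal.ofReal ((1 - t ^ 2) / 2 - (1 - t) * y)
      = ENNReal.ofReal (∫ y in Ioo (0:ℝ) t, ((1 - t ^ 2) / 2 - (1 - t) * y)) :=
    lint_ofReal_eq (fun y => (1 - t ^ 2) / 2 - (1 - t) * y)
      ((Continuous.integrableOn_Icc (by fun_prop)).mono_set Ioo_subset_Icc_self)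
      ((ae_restrict_mem measurableSet_Ioo).mono fun y hy => by nlinarith [hy.1, hy.2])
  have w2 : ∫⁻ y in Ico t 1, ENNReal.ofReal (y * t - t ^ 2 / 2)
      = ENNReal.ofReal (∫ y in Ico t 1, (y * t - t ^ 2 / 2)) :=
    lint_ofReal_eq (fun y => y * t - t ^ 2 / 2)
      ((Continuous.integrableOn_Icc (by fun_prop)).mono_set Ico_subset_Icc_self)
      ((ae_restrict_mem measurableSet_Ico).mono fun y hy => by nlinarith [hy.1, hy.2])
  rw [e1, e2, w1, w2]
  have v1 : ∫ y in Ioo (0:ℝ) t, ((1 - t ^ 2) / 2 - (1 - t) * y) = t * (1 - t) / 2 := by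
    rw [← integral_Ioc_eq_integral_Ioo, ← intervalIntegral.integral_of_le ht0.le,
      intervalIntegral.integral_sub intervalIntegrable_const
        (intervalIntegral.intervalIntegrable_id.const_mul _),
      intervalIntegral.integral_const, intervalIntegral.integral_const_mul, integral_id,
      smul_eq_mul]
    ring
  have v2 : ∫ y in Ico t 1, (y * t - t ^ 2 / 2) = t * (1 - t) / 2 := by
    rw [integral_Ico_eq_integral_Ioo, ← integral_Ioc_eq_integral_Ioo,
      ← intervalIntegral.integral_of_le ht1.le,
      intervalIntegral.integral_sub (intervalIntegral.intervalIntegrable_id.mul_const _)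
        intervalIntegrable_const,
      intervalIntegral.integral_const, intervalIntegral.integral_mul_const, integral_id,
      smul_eq_mul]
    ring
  rw [v1, v2, ← ENNReal.ofReal_add (by nlinarith) (by nlinarith)]
  congr 1
  ring

/-- Sharp weighted Poincaré inequality on [0,1] with degenerate weight y(1-y). -/
theorem weighted_poincare (f f' : ℝ → ℝ)
    (hAC : ∀ x ∈ Set.Icc (0:ℝ) 1, f x = f 0 + ∫ t in (0:ℝ)..x, f' t)
    (hint : IntervalIntegrable f' volume 0 1)
    (hfin : IntegrableOn (fun y => y * (1 - y) * (f' y) ^ 2) (Set.Ioc (0:ℝ) 1) volume) :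
    ∫ y in (0:ℝ)..1, (f y - ∫ z in (0:ℝ)..1, f z) ^ 2
      ≤ (1 / 2) * ∫ y in (0:ℝ)..1, y * (1 - y) * (f' y) ^ 2 := by
  have h01 : (0:ℝ) ≤ 1 := zero_le_one
  -- continuity of f on [0,1]
  have hfc : ContinuousOn f (Icc (0:ℝ) 1) := by
    have hprim : ContinuousOn (fun x => f 0 + ∫ t in (0:ℝ)..x, f' t) (Icc (0:ℝ) 1) := by
      have := intervalIntegral.continuousOn_primitive_interval' hint (by simp [uIcc_of_le h01] : (0:ℝ) ∈ Set.uIcc (0:ℝ) 1)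
      rw [uIcc_of_le h01] at this
      exact continuousOn_const.add this
    exact hprim.congr fun x hx => hAC x hx
  have hf1 : IntegrableOn f (Ioo (0:ℝ) 1) :=
    (hfc.integrableOn_Icc).mono_set Ioo_subset_Icc_self
  have hf2 : IntegrableOn (fun y => f y ^ 2) (Ioo (0:ℝ) 1) :=
    ((hfc.pow 2).integrableOn_Icc).mono_set Ioo_subset_Icc_self
  -- measurable representative of f'
  have hf'int : IntegrableOn f' (Ioc (0:ℝ) 1) := hint.1
  have hf'am : AEMeasurable f' (volume.restrict (Ioc (0:ℝ) 1)) :=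
    hf'int.aestronglyMeasurable.aemeasurable
  set g0 : ℝ → ℝ := hf'am.mk f' with hg0def
  have hg0m : Measurable g0 := hf'am.measurable_mk
  have hg0ae : f' =ᵐ[volume.restrict (Ioc (0:ℝ) 1)] g0 := hf'am.ae_eq_mk
  have hg0aeI : f' =ᵐ[volume.restrict (Ioo (0:ℝ) 1)] g0 :=
    ae_restrict_of_ae_restrict_of_subset Ioo_subset_Ioc_self hg0ae
  -- weighted integrability of g0^2
  have hwG : IntegrableOn (fun t => t * (1 - t) * g0 t ^ 2) (Ioc (0:ℝ) 1) :=
    hfin.congr (hg0ae.mono fun t ht => by dsimp only; rw [ht])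
  have hwGI : IntegrableOn (fun t => t * (1 - t) * g0 t ^ 2) (Ioo (0:ℝ) 1) :=
    hwG.mono_set Ioo_subset_Ioc_self
  -- integrability of g0^2 on interior subintervals
  have hGsub : ∀ a b : ℝ, 0 < a → b < 1 → IntegrableOn (fun t => g0 t ^ 2) (Ioc a b) := by
    intro a b ha hb
    rcases le_or_gt b a with h | h
    · rw [Ioc_eq_empty (not_lt.2 h)]; exact integrableOn_empty
    · have hc0 : 0 < a * (1 - b) := by nlinarith
      have hmaj : IntegrableOn (fun t => (a * (1 - b))⁻¹ * (t * (1 - t) * g0 t ^ 2)) (Ioc a b) :=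
        (hwG.mono_set (Ioc_subset_Ioc ha.le hb.le)).const_mul _
      refine Integrable.mono' hmaj ((hg0m.pow_const 2).aestronglyMeasurable) ?_
      refine (ae_restrict_mem measurableSet_Ioc).mono fun t ht => ?_
      rw [Real.norm_eq_abs, abs_of_nonneg (sq_nonneg _), inv_mul_eq_div, le_div_iff₀ hc0]
      have hw : a * (1 - b) ≤ t * (1 - t) :=
        mul_le_mul ht.1.le (by linarith [ht.2]) (by linarith) (by linarith [ht.1.le])
      nlinarith [hw, sq_nonneg (g0 t)]
  -- ordered pointwise Cauchy-Schwarz bound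
  have keyO : ∀ a b : ℝ, a ∈ Ioo (0:ℝ) 1 → b ∈ Ioo (0:ℝ) 1 → a ≤ b →
      (f b - f a) ^ 2 ≤ (b - a) * ∫ t in Ioc a b, g0 t ^ 2 := by
    intro a b ha hb hab
    have hIoc : Ioc a b ⊆ Ioc (0:ℝ) 1 := Ioc_subset_Ioc ha.1.le hb.2.le
    have hg0' : f' =ᵐ[volume.restrict (Ioc a b)] g0 :=
      ae_restrict_of_ae_restrict_of_subset hIoc hg0ae
    have hG1 : IntegrableOn g0 (Ioc a b) := IntegrableOn.mono_set (hf'int.congr hg0ae) hIoc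
    have hG2 : IntegrableOn (fun t => g0 t ^ 2) (Ioc a b) := hGsub a b ha.1 hb.2
    have hfd : f b - f a = ∫ t in Ioc a b, g0 t := by
      rw [hAC b ⟨ha.1.le.trans hab, hb.2.le⟩, hAC a ⟨ha.1.le, ha.2.le⟩]
      have hsub : ∀ c : ℝ, c ∈ Icc (0:ℝ) 1 → IntervalIntegrable f' volume 0 c := by
        intro c hc
        refine hint.mono_set ?_
        rw [uIcc_of_le hc.1, uIcc_of_le h01]
        exact Icc_subset_Icc le_rfl hc.2
      rw [add_sub_add_left_eq_sub,
        intervalIntegral.integral_interval_sub_left (hsub b ⟨ha.1.le.trans hab, hb.2.le⟩)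
          (hsub a ⟨ha.1.le, ha.2.le⟩),
        intervalIntegral.integral_of_le hab]
      exact integral_congr_ae hg0'
    haveI : IsFiniteMeasure (volume.restrict (Ioc a b)) := by
      constructor
      rw [Measure.restrict_apply_univ, Real.volume_Ioc]
      exact ENNReal.ofReal_lt_top
    have hcs := cs_aux (volume.restrict (Ioc a b)) g0 hG1 hG2
    rw [Measure.restrict_apply_univ, Real.volume_Ioc,
      ENNReal.toReal_ofReal (sub_nonneg.2 hab)] at hcs
    rw [hfd]
    exact hcs
  -- symmetric pointwise bound
  have key : ∀ y ∈ Ioo (0:ℝ) 1, ∀ z ∈ Ioo (0:ℝ) 1,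
      (f y - f z) ^ 2 ≤ |z - y| * ∫ t in Ioc (min y z) (max y z), g0 t ^ 2 := by
    intro y hy z hz
    rcases le_total y z with h | h
    · rw [min_eq_left h, max_eq_right h, abs_of_nonneg (sub_nonneg.2 h)]
      calc (f y - f z) ^ 2 = (f z - f y) ^ 2 := by ring
        _ ≤ (z - y) * ∫ t in Ioc y z, g0 t ^ 2 := keyO y z hy hz h
    · rw [min_eq_right h, max_eq_left h, abs_sub_comm, abs_of_nonneg (sub_nonneg.2 h)]
      exact keyO z y hz hy h
  -- notation
  set μ := volume.restrict (Ioo (0:ℝ) 1) with hμdef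
  have hprob : (μ Set.univ).toReal = 1 := by
    rw [hμdef, Measure.restrict_apply_univ, Real.volume_Ioo]
    norm_num
  set m := ∫ z in Ioo (0:ℝ) 1, f z with hmdef
  set q := ∫ z in Ioo (0:ℝ) 1, f z ^ 2 with hqdef
  set R := ∫ t in Ioo (0:ℝ) 1, t * (1 - t) * g0 t ^ 2 with hRdef
  set T := ∫ y in Ioo (0:ℝ) 1, ∫ z in Ioo (0:ℝ) 1, (f y - f z) ^ 2 with hTdef
  clear_value m q R T
  -- variance identity
  have hvar : ∫ y in Ioo (0:ℝ) 1, (f y - m) ^ 2 = q - m ^ 2 := by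
    have h3 : Integrable (fun y => f y ^ 2 - 2 * m * f y) μ := hf2.sub (hf1.const_mul (2 * m))
    calc ∫ y in Ioo (0:ℝ) 1, (f y - m) ^ 2
        = ∫ y in Ioo (0:ℝ) 1, ((f y ^ 2 - 2 * m * f y) + m ^ 2) := by
          congr 1; funext y; ring
      _ = (∫ y in Ioo (0:ℝ) 1, (f y ^ 2 - 2 * m * f y)) + ∫ _y in Ioo (0:ℝ) 1, m ^ 2 :=
          integral_add h3 (integrable_const _)
      _ = q - m ^ 2 := by
          rw [integral_sub hf2 (hf1.const_mul (2 * m)), integral_const_mul, integral_const,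
            smul_eq_mul, measureReal_def, hprob, hqdef, hmdef]
          ring
  -- double-integral identity
  have hTeq : T = 2 * (q - m ^ 2) := by
    have h2 := expand_double μ f hf1 hf2
    rw [hprob, hμdef] at h2
    rw [hTdef, hqdef, hmdef]
    linarith [h2]
  -- main lintegral bound : T ≤ R
  have hZint : ∀ y : ℝ, Integrable (fun z => (f y - f z) ^ 2) μ := by
    intro y
    refine (((integrable_const (f y ^ 2)).sub (hf1.const_mul (2 * f y))).add hf2).congr ?_
    exact Filter.Eventually.of_forall fun z => by
      simp only [Pi.add_apply, Pi.sub_apply]; ring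
  have innerEq : ∀ y : ℝ, ∫ z in Ioo (0:ℝ) 1, (f y - f z) ^ 2 = f y ^ 2 - 2 * m * f y + q := by
    intro y
    calc ∫ z in Ioo (0:ℝ) 1, (f y - f z) ^ 2
        = ∫ z in Ioo (0:ℝ) 1, ((f y ^ 2 - 2 * f y * f z) + f z ^ 2) := by
          congr 1; funext z; ring
      _ = (∫ z in Ioo (0:ℝ) 1, (f y ^ 2 - 2 * f y * f z)) + q := by
          rw [hqdef]
          exact integral_add ((integrable_const _).sub (hf1.const_mul (2 * f y))) hf2
      _ = f y ^ 2 - 2 * m * f y + q := by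
          rw [integral_sub (integrable_const _) (hf1.const_mul (2 * f y)), integral_const_mul,
            integral_const, smul_eq_mul, measureReal_def, hprob, hqdef, hmdef]
          ring
  have hHint : Integrable (fun y => ∫ z in Ioo (0:ℝ) 1, (f y - f z) ^ 2) μ := by
    refine ((hf2.sub (hf1.const_mul (2 * m))).add (integrable_const q)).congr ?_
    exact Filter.Eventually.of_forall fun y => by
      simp only [Pi.add_apply, Pi.sub_apply]; rw [innerEq y]
  have hHnn : ∀ y : ℝ, 0 ≤ ∫ z in Ioo (0:ℝ) 1, (f y - f z) ^ 2 :=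
    fun y => integral_nonneg fun z => sq_nonneg _
  -- pass to lintegrals
  have step1 : ENNReal.ofReal T = ∫⁻ y in Ioo (0:ℝ) 1, ∫⁻ z in Ioo (0:ℝ) 1,
      ENNReal.ofReal ((f y - f z) ^ 2) := by
    rw [hTdef, ofReal_integral_eq_lintegral_ofReal hHint
      (Filter.Eventually.of_forall hHnn)]
    exact lintegral_congr fun y =>
      ofReal_integral_eq_lintegral_ofReal (hZint y) (Filter.Eventually.of_forall fun z => sq_nonneg _)
  -- the ENNReal-valued weight function
  set g : ℝ → ℝ≥0∞ := fun t => ENNReal.ofReal (g0 t ^ 2) with hgdef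
  have hgm : Measurable g := (hg0m.pow_const 2).ennreal_ofReal
  have hgtop : ∀ t, g t ≠ ⊤ := fun t => ENNReal.ofReal_ne_top
  -- step 2 : pointwise bound inside the lintegral, and rewriting as a kernel
  have step2 : ∀ y ∈ Ioo (0:ℝ) 1,
      (∫⁻ z in Ioo (0:ℝ) 1, ENNReal.ofReal ((f y - f z) ^ 2))
        ≤ ∫⁻ z in Ioo (0:ℝ) 1, ∫⁻ t in Ioo (0:ℝ) 1,
            ENNReal.ofReal |z - y| * (if wpCond y z t then g t else 0) := by
    intro y hy
    refine lintegral_mono_ae ((ae_restrict_mem measurableSet_Ioo).mono fun z hz => ?_)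
    have hb := key y hy z hz
    have hSsub : Ioc (min y z) (max y z) ⊆ Ioo (0:ℝ) 1 := by
      intro t ht
      constructor
      · exact lt_of_le_of_lt (le_min hy.1.le hz.1.le) ht.1
      · exact lt_of_le_of_lt ht.2 (max_lt hy.2 hz.2)
    have hGS : IntegrableOn (fun t => g0 t ^ 2) (Ioc (min y z) (max y z)) := by
      refine hGsub _ _ ?_ ?_
      · exact lt_min hy.1 hz.1
      · exact max_lt hy.2 hz.2
    calc ENNReal.ofReal ((f y - f z) ^ 2)
        ≤ ENNReal.ofReal (|z - y| * ∫ t in Ioc (min y z) (max y z), g0 t ^ 2) :=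
          ENNReal.ofReal_le_ofReal hb
      _ = ENNReal.ofReal |z - y| * ENNReal.ofReal (∫ t in Ioc (min y z) (max y z), g0 t ^ 2) :=
          ENNReal.ofReal_mul (abs_nonneg _)
      _ = ENNReal.ofReal |z - y| * ∫⁻ t in Ioc (min y z) (max y z), g t := by
          rw [ofReal_integral_eq_lintegral_ofReal hGS
            (Filter.Eventually.of_forall fun t => sq_nonneg _)]
      _ = ENNReal.ofReal |z - y| * ∫⁻ t in Ioo (0:ℝ) 1, (if wpCond y z t then g t else 0) := by
          congr 1
          have hind : ∀ t : ℝ, (if wpCond y z t then g t else 0)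
              = (Ioc (min y z) (max y z)).indicator g t := by
            intro t
            by_cases h : wpCond y z t
            · rw [if_pos h, Set.indicator_of_mem ((wpCond_iff y z t).1 h)]
            · rw [if_neg h, Set.indicator_of_notMem (fun hc => h ((wpCond_iff y z t).2 hc))]
          simp only [hind]
          rw [lintegral_indicator measurableSet_Ioc, Measure.restrict_restrict measurableSet_Ioc,
            inter_eq_self_of_subset_left hSsub]
      _ = ∫⁻ t in Ioo (0:ℝ) 1, ENNReal.ofReal |z - y| * (if wpCond y z t then g t else 0) :=
          (lintegral_const_mul' _ _ ENNReal.ofReal_ne_top).symm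
  -- swap 1 : for fixed y
  have step3 : ∀ y : ℝ,
      (∫⁻ z in Ioo (0:ℝ) 1, ∫⁻ t in Ioo (0:ℝ) 1,
          ENNReal.ofReal |z - y| * (if wpCond y z t then g t else 0))
        = ∫⁻ t in Ioo (0:ℝ) 1, g t *
            ∫⁻ z in Ioo (0:ℝ) 1, (if wpCond y z t then ENNReal.ofReal |z - y| else 0) := by
    intro y
    have hmeas : AEMeasurable (Function.uncurry fun z t =>
        ENNReal.ofReal |z - y| * (if wpCond y z t then g t else 0)) (μ.prod μ) := by
      refine Measurable.aemeasurable ?_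
      refine Measurable.mul ?_ ?_
      · exact ((measurable_fst.sub measurable_const).abs).ennreal_ofReal
      · exact Measurable.ite (wpCond_measurableSet (fun _ => y) (fun p : ℝ × ℝ => p.1) (fun p : ℝ × ℝ => p.2)
          measurable_const measurable_fst measurable_snd) (hgm.comp measurable_snd)
          measurable_const
    rw [lintegral_lintegral_swap hmeas]
    refine lintegral_congr fun t => ?_
    rw [← lintegral_const_mul' (g t) _ (hgtop t)]
    refine lintegral_congr fun z => ?_
    by_cases h : wpCond y z t
    · simp [h, mul_comm]
    · simp [h]
  -- swap 2 : outer
  have step4 :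
      (∫⁻ y in Ioo (0:ℝ) 1, ∫⁻ t in Ioo (0:ℝ) 1, g t *
          ∫⁻ z in Ioo (0:ℝ) 1, (if wpCond y z t then ENNReal.ofReal |z - y| else 0))
        = ∫⁻ t in Ioo (0:ℝ) 1, g t *
            ∫⁻ y in Ioo (0:ℝ) 1, ∫⁻ z in Ioo (0:ℝ) 1,
              (if wpCond y z t then ENNReal.ofReal |z - y| else 0) := by
    have hκm : Measurable (fun q : ℝ × ℝ => ∫⁻ z in Ioo (0:ℝ) 1,
        (if wpCond q.1 z q.2 then ENNReal.ofReal |z - q.1| else 0)) := by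
      refine Measurable.lintegral_prod_right ?_
      refine Measurable.ite ?_ ?_ measurable_const
      · exact wpCond_measurableSet (fun p : (ℝ × ℝ) × ℝ => p.1.1) (fun p => p.2)
          (fun p => p.1.2) (measurable_fst.comp measurable_fst) measurable_snd
          (measurable_snd.comp measurable_fst)
      · exact ((measurable_snd.sub (measurable_fst.comp measurable_fst)).abs).ennreal_ofReal
    have hmeas : AEMeasurable (Function.uncurry fun y t => g t *
        ∫⁻ z in Ioo (0:ℝ) 1, (if wpCond y z t then ENNReal.ofReal |z - y| else 0)) (μ.prod μ) := by
      refine Measurable.aemeasurable ?_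
      exact (hgm.comp measurable_snd).mul hκm
    rw [lintegral_lintegral_swap hmeas]
    refine lintegral_congr fun t => ?_
    exact lintegral_const_mul' (g t) _ (hgtop t)
  -- assemble
  have hTleR : T ≤ R := by
    have hRnn : 0 ≤ R := by
      rw [hRdef]
      refine integral_nonneg_of_ae ((ae_restrict_mem measurableSet_Ioo).mono fun t ht => ?_)
      simp only [Pi.zero_apply]
      exact mul_nonneg (mul_nonneg ht.1.le (by linarith [ht.2])) (sq_nonneg _)
    have hTnn : 0 ≤ T := by
      rw [hTdef]
      exact integral_nonneg fun y => hHnn y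
    rw [← ENNReal.ofReal_le_ofReal_iff hRnn]
    calc ENNReal.ofReal T
        = ∫⁻ y in Ioo (0:ℝ) 1, ∫⁻ z in Ioo (0:ℝ) 1, ENNReal.ofReal ((f y - f z) ^ 2) := step1
      _ ≤ ∫⁻ y in Ioo (0:ℝ) 1, ∫⁻ z in Ioo (0:ℝ) 1, ∫⁻ t in Ioo (0:ℝ) 1,
            ENNReal.ofReal |z - y| * (if wpCond y z t then g t else 0) :=
          lintegral_mono_ae ((ae_restrict_mem measurableSet_Ioo).mono fun y hy => step2 y hy)
      _ = ∫⁻ y in Ioo (0:ℝ) 1, ∫⁻ t in Ioo (0:ℝ) 1, g t *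
            ∫⁻ z in Ioo (0:ℝ) 1, (if wpCond y z t then ENNReal.ofReal |z - y| else 0) :=
          lintegral_congr fun y => step3 y
      _ = ∫⁻ t in Ioo (0:ℝ) 1, g t *
            ∫⁻ y in Ioo (0:ℝ) 1, ∫⁻ z in Ioo (0:ℝ) 1,
              (if wpCond y z t then ENNReal.ofReal |z - y| else 0) := step4
      _ = ∫⁻ t in Ioo (0:ℝ) 1, ENNReal.ofReal (t * (1 - t) * g0 t ^ 2) := by
          refine setLIntegral_congr_fun measurableSet_Ioo
            (fun t ht => ?_)
          rw [kernel_total ht, hgdef]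
          rw [← ENNReal.ofReal_mul (sq_nonneg _)]
          congr 1
          ring
      _ = ENNReal.ofReal R := by
          rw [hRdef, ofReal_integral_eq_lintegral_ofReal hwGI
            ((ae_restrict_mem measurableSet_Ioo).mono fun t ht => by
              simp only [Pi.zero_apply]
              exact mul_nonneg (mul_nonneg ht.1.le (by linarith [ht.2])) (sq_nonneg _))]
  -- final assembly
  rw [intervalIntegral.integral_of_le h01, intervalIntegral.integral_of_le h01,
    intervalIntegral.integral_of_le h01, integral_Ioc_eq_integral_Ioo,
    integral_Ioc_eq_integral_Ioo, integral_Ioc_eq_integral_Ioo]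
  have hRHS : ∫ y in Ioo (0:ℝ) 1, y * (1 - y) * f' y ^ 2 = R := by
    rw [hRdef]
    exact integral_congr_ae (hg0aeI.mono fun y hy => by dsimp only; rw [hy])
  rw [hRHS, ← hmdef, hvar]
  linarith [hTeq, hTleR]
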